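/- Let A, B, C : [0,∞) → ℝ be differentiable with A(t), B(t), C(t) > 0, satisfying A' = 4(B² − A²)/(BC), B' = 4(A² − B²)/(AC), C' = 4(A − B)²/(AB), with A(t) ≠ B(t) for all t ≥ 0, and suppose B(t)/A(t) → 1 as t → ∞. Define f(x) = 6x³ − 6x² + 2x + 6x⁻³ − 6x⁻² + 2x⁻¹ − 4 and Φ(t) := √(f(A(t)/B(t)))/C(t). Then Φ is strictly decreasing on [0,∞) and Φ(t) → 0 as t → ∞. -/

import Mathlib

open Filter Set

lemma fexpr_pos (u : ℝ) (hu : 0 < u) (hne : u ≠ 1) :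
    0 < 6 * u ^ 3 - 6 * u ^ 2 + 2 * u + 6 / u ^ 3 - 6 / u ^ 2 + 2 / u - 4 := by
  have hu0 : u ≠ 0 := ne_of_gt hu
  have h3 : (0:ℝ) < u ^ 3 := by positivity
  have hkey : u ^ 3 * (6 * u ^ 3 - 6 * u ^ 2 + 2 * u + 6 / u ^ 3 - 6 / u ^ 2 + 2 / u - 4)
      = (u - 1) ^ 2 * (6 * u ^ 4 + 6 * u ^ 3 + 8 * u ^ 2 + 6 * u + 6) := by
    field_simp; ring
  have hpos : 0 < (u - 1) ^ 2 * (6 * u ^ 4 + 6 * u ^ 3 + 8 * u ^ 2 + 6 * u + 6) := by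
    have : u - 1 ≠ 0 := sub_ne_zero.mpr hne
    positivity
  nlinarith

lemma key_ineq (u : ℝ) (hu : 0 < u) (hne : u ≠ 1) :
    u * (1 - u ^ 2) * (18 * u ^ 2 - 12 * u + 2 - 18 / u ^ 4 + 12 / u ^ 3 - 2 / u ^ 2)
      - (u - 1) ^ 2 * (6 * u ^ 3 - 6 * u ^ 2 + 2 * u + 6 / u ^ 3 - 6 / u ^ 2 + 2 / u - 4) < 0 := by
  have hu0 : u ≠ 0 := ne_of_gt hu
  have h4 : (0:ℝ) < u ^ 4 := by positivity
  have hkey : u ^ 4 * (u * (1 - u ^ 2) * (18 * u ^ 2 - 12 * u + 2 - 18 / u ^ 4 + 12 / u ^ 3 - 2 / u ^ 2)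
      - (u - 1) ^ 2 * (6 * u ^ 3 - 6 * u ^ 2 + 2 * u + 6 / u ^ 3 - 6 / u ^ 2 + 2 / u - 4))
      = -2 * u * (u - 1) ^ 2 * (12 * u ^ 6 + 9 * u ^ 5 + 8 * u ^ 4 + 6 * u ^ 3 + 8 * u ^ 2 + 9 * u + 12) := by
    field_simp; ring
  have hneg : -2 * u * (u - 1) ^ 2 * (12 * u ^ 6 + 9 * u ^ 5 + 8 * u ^ 4 + 6 * u ^ 3 + 8 * u ^ 2 + 9 * u + 12) < 0 := by
    have h1 : u - 1 ≠ 0 := sub_ne_zero.mpr hne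
    have : 0 < 2 * u * (u - 1) ^ 2 * (12 * u ^ 6 + 9 * u ^ 5 + 8 * u ^ 4 + 6 * u ^ 3 + 8 * u ^ 2 + 9 * u + 12) := by positivity
    linarith
  nlinarith

lemma f_hasDerivAt (u : ℝ) (hu : u ≠ 0) :
    HasDerivAt (fun y : ℝ => 6 * y ^ 3 - 6 * y ^ 2 + 2 * y + 6 / y ^ 3 - 6 / y ^ 2 + 2 / y - 4)
      (18 * u ^ 2 - 12 * u + 2 - 18 / u ^ 4 + 12 / u ^ 3 - 2 / u ^ 2) u := by
  have h3 : u ^ 3 ≠ 0 := pow_ne_zero 3 hu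
  have h2 : u ^ 2 ≠ 0 := pow_ne_zero 2 hu
  have hp3 := hasDerivAt_pow 3 u
  have hp2 := hasDerivAt_pow 2 u
  have hp1 := hasDerivAt_id u
  have ha : HasDerivAt (fun y : ℝ => 6 * y ^ 3) (6 * (3 * u ^ 2)) u := hp3.const_mul 6
  have hb : HasDerivAt (fun y : ℝ => 6 * y ^ 2) (6 * (2 * u ^ 1)) u := hp2.const_mul 6
  have hc : HasDerivAt (fun y : ℝ => 2 * y) (2 * 1) u := hp1.const_mul 2
  have hd : HasDerivAt (fun y : ℝ => 6 / y ^ 3)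
      ((0 * u ^ 3 - 6 * (3 * u ^ 2)) / (u ^ 3) ^ 2) u :=
    (hasDerivAt_const u 6).div hp3 h3
  have he : HasDerivAt (fun y : ℝ => 6 / y ^ 2)
      ((0 * u ^ 2 - 6 * (2 * u ^ 1)) / (u ^ 2) ^ 2) u :=
    (hasDerivAt_const u 6).div hp2 h2
  have hg : HasDerivAt (fun y : ℝ => 2 / y) ((0 * u - 2 * 1) / u ^ 2) u :=
    (hasDerivAt_const u 2).div hp1 hu
  have := ((((((ha.sub hb).add hc).add hd).sub he).add hg).sub (hasDerivAt_const u 4))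
  refine this.congr_deriv ?_
  field_simp
  ring


/-- Ricci flow ODE on the universal cover of `Isom(ℝ²)` with `A ≠ B`: the quantity
`Φ(t) = √(f(A/B))/C`, with `f(x) = 6x³ - 6x² + 2x + 6x⁻³ - 6x⁻² + 2x⁻¹ - 4`,
is strictly decreasing and tends to `0` as `t → ∞`. -/
theorem isomR2_L1_norm_decreasing (A B C : ℝ → ℝ)
    (hA : ∀ t : ℝ, 0 ≤ t → 0 < A t)
    (hB : ∀ t : ℝ, 0 ≤ t → 0 < B t)
    (hC : ∀ t : ℝ, 0 ≤ t → 0 < C t)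
    (hA' : ∀ t : ℝ, 0 ≤ t →
      HasDerivAt A (4 * ((B t) ^ 2 - (A t) ^ 2) / (B t * C t)) t)
    (hB' : ∀ t : ℝ, 0 ≤ t →
      HasDerivAt B (4 * ((A t) ^ 2 - (B t) ^ 2) / (A t * C t)) t)
    (hC' : ∀ t : ℝ, 0 ≤ t →
      HasDerivAt C (4 * (A t - B t) ^ 2 / (A t * B t)) t)
    (hne : ∀ t : ℝ, 0 ≤ t → A t ≠ B t)
    (hlim : Tendsto (fun t => B t / A t) atTop (nhds 1))
    (f : ℝ → ℝ)
    (hf : ∀ x : ℝ, f x = 6 * x ^ 3 - 6 * x ^ 2 + 2 * x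
      + 6 / x ^ 3 - 6 / x ^ 2 + 2 / x - 4) :
    StrictAntiOn (fun t => Real.sqrt (f (A t / B t)) / C t) (Set.Ici 0) ∧
    Tendsto (fun t => Real.sqrt (f (A t / B t)) / C t) atTop (nhds 0) := by
  have hfe : f = fun y : ℝ => 6 * y ^ 3 - 6 * y ^ 2 + 2 * y + 6 / y ^ 3 - 6 / y ^ 2 + 2 / y - 4 :=
    funext hf
  -- main derivative claim
  have main : ∀ t : ℝ, 0 ≤ t →
      ∃ d : ℝ, HasDerivAt (fun s => Real.sqrt (f (A s / B s)) / C s) d t ∧ d < 0 := by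
    intro t ht
    have ha := hA t ht
    have hb := hB t ht
    have hc := hC t ht
    set u : ℝ := A t / B t with hu_def
    have hu : 0 < u := div_pos ha hb
    have hu0 : u ≠ 0 := ne_of_gt hu
    have hune : u ≠ 1 := by
      intro h
      exact hne t ht (by rw [hu_def, div_eq_one_iff_eq hb.ne'] at h; exact h)
    have hfpos : 0 < f u := by rw [hf]; exact fexpr_pos u hu hune
    -- derivative of x = A/B
    have hx : HasDerivAt (fun s => A s / B s) (8 * (1 - u ^ 2) / C t) t := by
      have h := (hA' t ht).div (hB' t ht) hb.ne'
      refine h.congr_deriv ?_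
      rw [hu_def]
      field_simp
      ring
    -- derivative of f ∘ x
    have hfx : HasDerivAt (fun s => f (A s / B s))
        ((18 * u ^ 2 - 12 * u + 2 - 18 / u ^ 4 + 12 / u ^ 3 - 2 / u ^ 2) * (8 * (1 - u ^ 2) / C t)) t := by
      rw [hfe]
      exact ((f_hasDerivAt u hu0).comp t hx : _)
    -- derivative of sqrt ∘ f ∘ x
    have hs : HasDerivAt (fun s => Real.sqrt (f (A s / B s)))
        (1 / (2 * Real.sqrt (f u)) *
          ((18 * u ^ 2 - 12 * u + 2 - 18 / u ^ 4 + 12 / u ^ 3 - 2 / u ^ 2) * (8 * (1 - u ^ 2) / C t))) t :=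
      ((Real.hasDerivAt_sqrt hfpos.ne').comp t hfx : _)
    have hderiv := hs.div (hC' t ht) hc.ne'
    refine ⟨_, hderiv, ?_⟩
    -- negativity of the derivative
    set s := Real.sqrt (f u) with hs_def
    have hspos : 0 < s := Real.sqrt_pos.mpr hfpos
    have hs2 : s ^ 2 = f u := Real.sq_sqrt hfpos.le
    apply div_neg_of_neg_of_pos _ (by positivity)
    -- rewrite C' expression in terms of u
    have hCexpr : 4 * (A t - B t) ^ 2 / (A t * B t) = 4 * (u - 1) ^ 2 / u := by
      rw [hu_def]; field_simp
    rw [hCexpr]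
    set F' : ℝ := 18 * u ^ 2 - 12 * u + 2 - 18 / u ^ 4 + 12 / u ^ 3 - 2 / u ^ 2 with hF'
    have hK : u * (1 - u ^ 2) * F' - (u - 1) ^ 2 * (f u) < 0 := by
      rw [hf]; exact key_ineq u hu hune
    have hfact : (s * u) * (1 / (2 * s) * (F' * (8 * (1 - u ^ 2) / C t)) * C t
        - s * (4 * (u - 1) ^ 2 / u))
        = 4 * (u * (1 - u ^ 2) * F' - (u - 1) ^ 2 * s ^ 2) := by
      field_simp
      ring
    rw [hs2] at hfact
    by_contra hge
    push_neg at hge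
    have hnn := mul_nonneg (mul_pos hspos hu).le hge
    rw [hfact] at hnn
    linarith
  constructor
  · apply strictAntiOn_of_deriv_neg (convex_Ici 0)
    · intro t ht
      exact ((main t ht).choose_spec.1).continuousAt.continuousWithinAt
    · intro t ht
      rw [interior_Ici] at ht
      obtain ⟨d, hd, hdneg⟩ := main t ht.le
      rwa [hd.deriv]
  · -- the limit
    have hx1 : Tendsto (fun t => A t / B t) atTop (nhds 1) := by
      have h := hlim.inv₀ one_ne_zero
      simpa [inv_div] using h
    have hf1 : f 1 = 0 := by rw [hf]; norm_num
    have hcont : ContinuousAt f 1 := by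
      rw [hfe]
      have h1 : ((1:ℝ)) ^ 3 ≠ 0 := by norm_num
      have h2 : ((1:ℝ)) ^ 2 ≠ 0 := by norm_num
      have h0 : (1:ℝ) ≠ 0 := one_ne_zero
      fun_prop (disch := norm_num)
    have hfx0 : Tendsto (fun t => f (A t / B t)) atTop (nhds 0) := by
      have h := hcont.tendsto.comp hx1
      rwa [hf1] at h
    have hsq0 : Tendsto (fun t => Real.sqrt (f (A t / B t))) atTop (nhds 0) := by
      have h := (Real.continuous_sqrt.continuousAt).tendsto.comp hfx0
      rwa [Real.sqrt_zero] at h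
    have hCmono : MonotoneOn C (Set.Ici 0) := by
      apply monotoneOn_of_deriv_nonneg (convex_Ici 0)
      · intro t ht
        exact (hC' t ht).continuousAt.continuousWithinAt
      · intro t ht
        rw [interior_Ici] at ht
        exact (hC' t ht.le).differentiableAt.differentiableWithinAt
      · intro t ht
        rw [interior_Ici] at ht
        rw [(hC' t ht.le).deriv]
        have := hA t ht.le
        have := hB t ht.le
        positivity
    have hCge : ∀ t : ℝ, 0 ≤ t → C 0 ≤ C t := fun t ht =>
      hCmono self_mem_Ici ht ht
    have hupper : Tendsto (fun t => Real.sqrt (f (A t / B t)) / C 0) atTop (nhds 0) := by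
      have h := hsq0.div_const (C 0)
      simpa using h
    refine tendsto_of_tendsto_of_tendsto_of_le_of_le' tendsto_const_nhds hupper ?_ ?_
    · filter_upwards [eventually_ge_atTop (0:ℝ)] with t ht
      exact div_nonneg (Real.sqrt_nonneg _) (hC t ht).le
    · filter_upwards [eventually_ge_atTop (0:ℝ)] with t ht
      gcongr
      · exact hC 0 le_rfl
      · exact hCge t ht
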